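/- Let f: [r₀, ∞) → ℝ be C² with r f'(r)/√(1 + f'(r)²) monotone increasing in r (i.e., the graph z = f(r), as a surface of revolution in ℝ³, has nonnegative mean curvature with respect to the upward normal). If f is bounded, then f'(r) ≤ 0 for all r, and hence f is monotone decreasing; in particular lim_{r→∞} f(r) = inf over tails and lim_{r→∞} f(r) ≤ max f. -/

import Mathlib

open Filter

/-- Let f : [r₀, ∞) → ℝ be C² with r f'(r)/√(1 + f'(r)²) monotone increasing
in r (nonnegative mean curvature of the surface of revolution z = f(r) w.r.t. the upward
normal). If f is bounded, then f'(r) ≤ 0 for all r, hence f is monotone decreasing; in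
particular f tends to a limit L at infinity with L ≤ f(r) for every r (so the limit is at
most max f). -/
theorem stmt_6 (r₀ : ℝ) (hr₀ : 0 < r₀) (f : ℝ → ℝ)
    (hf : ContDiffOn ℝ 2 f (Set.Ici r₀))
    (hmono : MonotoneOn (fun r => r * deriv f r / Real.sqrt (1 + (deriv f r) ^ 2))
      (Set.Ici r₀))
    (hbdd : ∃ M, ∀ r ∈ Set.Ici r₀, |f r| ≤ M) :
    (∀ r ∈ Set.Ici r₀, deriv f r ≤ 0) ∧
    AntitoneOn f (Set.Ici r₀) ∧
    ∃ L : ℝ, Tendsto f atTop (nhds L) ∧ ∀ r ∈ Set.Ici r₀, L ≤ f r := by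
  obtain ⟨M, hM⟩ := hbdd
  have hdiff : ∀ x, r₀ < x → DifferentiableAt ℝ f x := fun x hx =>
    (hf.differentiableOn (by norm_num)).differentiableAt (Ici_mem_nhds hx)
  have hsq : ∀ y : ℝ, 0 < Real.sqrt (1 + y ^ 2) := fun y =>
    Real.sqrt_pos.mpr (by positivity)
  have hsq1 : ∀ y : ℝ, 1 ≤ Real.sqrt (1 + y ^ 2) := fun y => by
    have := Real.sqrt_le_sqrt (show (1:ℝ) ≤ 1 + y ^ 2 by nlinarith [sq_nonneg y])
    simpa [Real.sqrt_one] using this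
  -- Key claim: the derivative is nonpositive everywhere on [r₀, ∞).
  have key : ∀ r₁ ∈ Set.Ici r₀, deriv f r₁ ≤ 0 := by
    intro r₁ hr₁
    by_contra hpos
    push_neg at hpos
    set c := r₁ * deriv f r₁ / Real.sqrt (1 + (deriv f r₁) ^ 2) with hc
    have hr₁0 : 0 < r₁ := lt_of_lt_of_le hr₀ hr₁
    have hc0 : 0 < c := div_pos (mul_pos hr₁0 hpos) (hsq _)
    -- derivative lower bound c / r for r ≥ r₁
    have hd : ∀ r, r₁ ≤ r → c / r ≤ deriv f r := by
      intro r hr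
      have hr0 : 0 < r := lt_of_lt_of_le hr₁0 hr
      have h1 : c ≤ r * deriv f r / Real.sqrt (1 + (deriv f r) ^ 2) :=
        hmono hr₁ (le_trans hr₁ hr) hr
      have h2 : c * Real.sqrt (1 + (deriv f r) ^ 2) ≤ r * deriv f r :=
        (le_div_iff₀ (hsq _)).mp h1
      have h3 : c ≤ c * Real.sqrt (1 + (deriv f r) ^ 2) := by
        nlinarith [hsq1 (deriv f r)]
      rw [div_le_iff₀ hr0]
      nlinarith
    -- g r = f r - c * log r is monotone on [r₁, ∞)
    set g : ℝ → ℝ := fun r => f r - c * Real.log r with hg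
    have hgc : ContinuousOn g (Set.Ici r₁) := by
      apply ContinuousOn.sub
      · exact hf.continuousOn.mono (Set.Ici_subset_Ici.mpr hr₁)
      · exact continuousOn_const.mul (fun x hx =>
          (Real.continuousAt_log (ne_of_gt (lt_of_lt_of_le hr₁0 hx))).continuousWithinAt)
    have hgd : ∀ x ∈ interior (Set.Ici r₁), DifferentiableAt ℝ g x := by
      intro x hx
      rw [interior_Ici] at hx
      have hx0 : 0 < x := lt_trans hr₁0 hx
      exact (hdiff x (lt_of_le_of_lt hr₁ hx)).sub
        ((Real.differentiableAt_log (ne_of_gt hx0)).const_mul c)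
    have hgderiv : ∀ x ∈ interior (Set.Ici r₁), 0 ≤ deriv g x := by
      intro x hx
      have hx' := hx
      rw [interior_Ici] at hx'
      have hx0 : 0 < x := lt_trans hr₁0 hx'
      have hdx : deriv g x = deriv f x - c * x⁻¹ := by
        rw [hg, deriv_fun_sub (hdiff x (lt_of_le_of_lt hr₁ hx'))
          ((Real.differentiableAt_log (ne_of_gt hx0)).const_mul c),
          deriv_const_mul _ (Real.differentiableAt_log (ne_of_gt hx0)),
          Real.deriv_log]
      rw [hdx]
      have := hd x (le_of_lt hx')
      rw [div_eq_mul_inv] at this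
      linarith
    have hgmono : MonotoneOn g (Set.Ici r₁) :=
      monotoneOn_of_deriv_nonneg (convex_Ici r₁) hgc
        (fun x hx => (hgd x hx).differentiableWithinAt) hgderiv
    -- pick R large and contradict boundedness
    set R := max r₁ (Real.exp ((2 * M + c * Real.log r₁ + 1) / c)) with hR
    have hRr₁ : r₁ ≤ R := le_max_left _ _
    have hlogR : (2 * M + c * Real.log r₁ + 1) / c ≤ Real.log R := by
      have := Real.log_le_log (Real.exp_pos ((2 * M + c * Real.log r₁ + 1) / c))
        (le_max_right r₁ (Real.exp ((2 * M + c * Real.log r₁ + 1) / c)))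
      rwa [Real.log_exp] at this
    have hclogR : 2 * M + c * Real.log r₁ + 1 ≤ c * Real.log R := by
      rw [div_le_iff₀ hc0] at hlogR
      linarith [hlogR]
    have h4 : g r₁ ≤ g R := hgmono (le_refl r₁ : r₁ ∈ Set.Ici r₁) hRr₁ hRr₁
    have h5 : |f R| ≤ M := hM R (le_trans hr₁ hRr₁)
    have h6 : |f r₁| ≤ M := hM r₁ hr₁
    rw [abs_le] at h5 h6
    simp only [hg] at h4
    linarith [h4, h5.2, h6.1]
  refine ⟨key, ?_, ?_⟩
  · exact antitoneOn_of_deriv_nonpos (convex_Ici r₀) hf.continuousOn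
      (fun x hx => (hdiff x (by rwa [interior_Ici] at hx)).differentiableWithinAt)
      (fun x hx => key x (le_of_lt (show r₀ < x by rwa [interior_Ici] at hx)))
  · have hAnti : AntitoneOn f (Set.Ici r₀) :=
      antitoneOn_of_deriv_nonpos (convex_Ici r₀) hf.continuousOn
        (fun x hx => (hdiff x (by rwa [interior_Ici] at hx)).differentiableWithinAt)
        (fun x hx => key x (le_of_lt (show r₀ < x by rwa [interior_Ici] at hx)))
    set g : ℝ → ℝ := fun r => f (max r r₀) with hg
    have hbb : BddBelow (Set.range g) := by
      refine ⟨-M, ?_⟩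
      rintro _ ⟨r, rfl⟩
      have := hM (max r r₀) (le_max_right r r₀)
      rw [abs_le] at this
      exact this.1
    have hganti : Antitone g := fun a b hab =>
      hAnti (le_max_right a r₀) (le_max_right b r₀) (max_le_max hab le_rfl)
    refine ⟨⨅ r, g r, ?_, ?_⟩
    · refine (tendsto_atTop_ciInf hganti hbb).congr' ?_
      filter_upwards [eventually_ge_atTop r₀] with r hr
      simp [hg, max_eq_left hr]
    · intro r hr
      have := ciInf_le hbb r
      simpa [hg, max_eq_left (show r₀ ≤ r from hr)] using this
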